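/- Let l : 2^V → ℝ be submodular and increasing with l(∅) = 0 and l(A) ≥ 0 for all A ⊆ V. Then for every s ∈ [0,1]^p, the slack-rescaling surrogate is dominated by the Lovász extension: S_l(s) ≤ ℓ̂(s). Moreover the Lovász hinge coincides with the Lovász extension on the unit cube, so the Lovász hinge has equal or higher value than slack rescaling inside the unit cube. -/
import Mathlib


open Finset

/-- The chain {σ₁,…,σⱼ}: the image under σ of the first j indices. -/
def chainSet {p : ℕ} (σ : Equiv.Perm (Fin p)) (j : ℕ) : Finset (Fin p) :=
  (Finset.univ.filter fun k : Fin p => (k : ℕ) < j).image σ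

/-- G_l(σ, s) = Σ_{j=1}^p s_{σ_j}·(l({σ₁,…,σⱼ}) − l({σ₁,…,σ_{j−1}})). -/
def lovaszSum {p : ℕ} (l : Finset (Fin p) → ℝ) (σ : Equiv.Perm (Fin p))
    (s : Fin p → ℝ) : ℝ :=
  ∑ j : Fin p, s (σ j) * (l (chainSet σ ((j : ℕ) + 1)) - l (chainSet σ (j : ℕ)))

/-- Indicator vector 1_A ∈ {0,1}^p of A ⊆ V. -/
def indic {p : ℕ} (A : Finset (Fin p)) : Fin p → ℝ := fun i => if i ∈ A then 1 else 0

/-- A permutation sorting s in decreasing order: s_{π_1} ≥ … ≥ s_{π_p}. -/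
def SortsDesc {p : ℕ} (π : Equiv.Perm (Fin p)) (s : Fin p → ℝ) : Prop :=
  ∀ j k : Fin p, j ≤ k → s (π k) ≤ s (π j)

/-- A canonical permutation sorting s in decreasing order. -/
noncomputable def sortDesc {p : ℕ} (s : Fin p → ℝ) : Equiv.Perm (Fin p) :=
  Tuple.sort (fun i => -s i)

/-- The Lovász extension ℓ̂(s) = G_l(π, s) for a permutation π sorting s
decreasingly (independent of the choice of such π). -/
noncomputable def lovaszExt {p : ℕ} (l : Finset (Fin p) → ℝ) (s : Fin p → ℝ) : ℝ :=
  lovaszSum l (sortDesc s) s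

/-- Submodularity: l(A) + l(B) ≥ l(A ∪ B) + l(A ∩ B). -/
def Submodular {p : ℕ} (l : Finset (Fin p) → ℝ) : Prop :=
  ∀ A B : Finset (Fin p), l (A ∪ B) + l (A ∩ B) ≤ l A + l B

/-- The slack-rescaling surrogate S_l(s) = max_{I⊆V} l(I)·(1 − 2 Σ_{i∈I}(1 − s_i)). -/
noncomputable def slackSur {p : ℕ} (l : Finset (Fin p) → ℝ) (s : Fin p → ℝ) : ℝ :=
  Finset.univ.sup' Finset.univ_nonempty
    (fun I : Finset (Fin p) => l I * (1 - 2 * ∑ i ∈ I, (1 - s i)))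

/-- The margin-rescaling surrogate M_l(s) = max_{I⊆V} ( l(I) − 2 Σ_{i∈I}(1 − s_i) ). -/
noncomputable def marginSur {p : ℕ} (l : Finset (Fin p) → ℝ) (s : Fin p → ℝ) : ℝ :=
  Finset.univ.sup' Finset.univ_nonempty
    (fun I : Finset (Fin p) => l I - 2 * ∑ i ∈ I, (1 - s i))

/-- The Lovász hinge, general (non-monotonic) case. -/
noncomputable def hingeGen {p : ℕ} (l : Finset (Fin p) → ℝ) (s : Fin p → ℝ) : ℝ :=
  Finset.univ.sup' Finset.univ_nonempty
    (fun σ : Equiv.Perm (Fin p) => max 0 (lovaszSum l σ s))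

/-- The Lovász hinge, increasing case (componentwise thresholding). -/
noncomputable def hingeInc {p : ℕ} (l : Finset (Fin p) → ℝ) (s : Fin p → ℝ) : ℝ :=
  Finset.univ.sup' Finset.univ_nonempty
    (fun σ : Equiv.Perm (Fin p) =>
      ∑ j : Fin p, max (s (σ j)) 0 *
        (l (chainSet σ ((j : ℕ) + 1)) - l (chainSet σ (j : ℕ))))

/-! ### Auxiliary lemmas -/

lemma mem_chainSet {p : ℕ} (σ : Equiv.Perm (Fin p)) (j : ℕ) (i : Fin p) :
    i ∈ chainSet σ j ↔ (σ.symm i : ℕ) < j := by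
  simp only [chainSet, mem_image, mem_filter, mem_univ, true_and]
  constructor
  · rintro ⟨k, hk, rfl⟩; simpa using hk
  · intro h; exact ⟨σ.symm i, h, by simp⟩

lemma chainSet_zero {p : ℕ} (σ : Equiv.Perm (Fin p)) : chainSet σ 0 = ∅ := by
  ext i; simp [mem_chainSet]

lemma chainSet_univ {p : ℕ} (σ : Equiv.Perm (Fin p)) {m : ℕ} (hm : p ≤ m) :
    chainSet σ m = Finset.univ := by
  ext i; simp only [mem_chainSet, mem_univ, iff_true]
  exact lt_of_lt_of_le (σ.symm i).isLt hm

lemma chainSet_succ {p : ℕ} (σ : Equiv.Perm (Fin p)) {m : ℕ} (hm : m < p) :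
    chainSet σ (m + 1) = insert (σ ⟨m, hm⟩) (chainSet σ m) := by
  ext i
  simp only [mem_chainSet, mem_insert, Nat.lt_succ_iff_lt_or_eq]
  constructor
  · rintro (h | h)
    · exact Or.inr h
    · left
      have : σ.symm i = ⟨m, hm⟩ := Fin.ext h
      rw [show i = σ (σ.symm i) by simp, this]
  · rintro (rfl | h)
    · right; simp
    · exact Or.inl h

lemma notMem_chainSet_self {p : ℕ} (σ : Equiv.Perm (Fin p)) {m : ℕ} (hm : m < p) :
    σ ⟨m, hm⟩ ∉ chainSet σ m := by
  simp [mem_chainSet]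

lemma chainSet_mono {p : ℕ} (σ : Equiv.Perm (Fin p)) {m n : ℕ} (h : m ≤ n) :
    chainSet σ m ⊆ chainSet σ n := by
  intro i hi; rw [mem_chainSet] at *; omega

/-- marginal gain of element i in the chain of σ -/
def gMarg {p : ℕ} (l : Finset (Fin p) → ℝ) (σ : Equiv.Perm (Fin p)) (i : Fin p) : ℝ :=
  l (chainSet σ ((σ.symm i : ℕ) + 1)) - l (chainSet σ (σ.symm i : ℕ))

lemma gMarg_apply {p : ℕ} (l : Finset (Fin p) → ℝ) (σ : Equiv.Perm (Fin p)) (j : Fin p) :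
    gMarg l σ (σ j) = l (chainSet σ ((j : ℕ) + 1)) - l (chainSet σ (j : ℕ)) := by
  simp [gMarg]

lemma chainSet_stab {p : ℕ} (σ : Equiv.Perm (Fin p)) {m : ℕ} (hm : p ≤ m) :
    chainSet σ (m + 1) = chainSet σ m := by
  rw [chainSet_univ σ hm, chainSet_univ σ (le_trans hm (Nat.le_succ m))]

/-- exact telescoping over a chain -/
lemma sum_gMarg_chain {p : ℕ} (l : Finset (Fin p) → ℝ) (σ : Equiv.Perm (Fin p))
    (h0 : l ∅ = 0) (m : ℕ) :
    ∑ i ∈ chainSet σ m, gMarg l σ i = l (chainSet σ m) := by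
  induction m with
  | zero => simp [chainSet_zero, h0]
  | succ m ih =>
    by_cases hm : m < p
    · rw [chainSet_succ σ hm, Finset.sum_insert (notMem_chainSet_self σ hm), ih,
        gMarg_apply, ← chainSet_succ σ hm]
      ring
    · rw [chainSet_stab σ (le_of_not_gt hm), ih]

/-- submodular bound: the sum of marginals over any set A is at most l A -/
lemma sum_gMarg_le {p : ℕ} (l : Finset (Fin p) → ℝ) (σ : Equiv.Perm (Fin p))
    (hsub : Submodular l) (h0 : l ∅ = 0) (A : Finset (Fin p)) :
    ∑ i ∈ A, gMarg l σ i ≤ l A := by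
  have key : ∀ m : ℕ, ∑ i ∈ A ∩ chainSet σ m, gMarg l σ i ≤ l (A ∩ chainSet σ m) := by
    intro m
    induction m with
    | zero => simp [chainSet_zero, h0]
    | succ m ih =>
      by_cases hm : m < p
      · set x := σ ⟨m, hm⟩ with hx
        by_cases hxA : x ∈ A
        · have hins : A ∩ chainSet σ (m + 1) = insert x (A ∩ chainSet σ m) := by
            rw [chainSet_succ σ hm]
            ext i
            simp only [mem_inter, mem_insert]
            constructor
            · rintro ⟨hiA, (rfl | hi)⟩
              · exact Or.inl rfl
              · exact Or.inr ⟨hiA, hi⟩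
            · rintro (rfl | ⟨hiA, hi⟩)
              · exact ⟨hxA, Or.inl rfl⟩
              · exact ⟨hiA, Or.inr hi⟩
          have hxnot : x ∉ A ∩ chainSet σ m := fun h =>
            notMem_chainSet_self σ hm (mem_of_mem_inter_right h)
          rw [hins, Finset.sum_insert hxnot]
          have hg : gMarg l σ x = l (chainSet σ (m + 1)) - l (chainSet σ m) :=
            gMarg_apply l σ ⟨m, hm⟩
          have hunion : (A ∩ chainSet σ (m + 1)) ∪ chainSet σ m = chainSet σ (m + 1) := by
            rw [chainSet_succ σ hm]
            ext i
            simp only [mem_union, mem_inter, mem_insert]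
            constructor
            · rintro (⟨_, h⟩ | h)
              · exact h
              · exact Or.inr h
            · rintro (rfl | h)
              · exact Or.inl ⟨hxA, Or.inl rfl⟩
              · exact Or.inr h
          have hinter : (A ∩ chainSet σ (m + 1)) ∩ chainSet σ m = A ∩ chainSet σ m := by
            ext i
            simp only [mem_inter, mem_chainSet]
            constructor
            · rintro ⟨⟨hA, _⟩, h⟩; exact ⟨hA, h⟩
            · rintro ⟨hA, h⟩; exact ⟨⟨hA, by omega⟩, h⟩
          have := hsub (A ∩ chainSet σ (m + 1)) (chainSet σ m)
          rw [hunion, hinter] at this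
          rw [hg, ← hins]
          linarith
        · have : A ∩ chainSet σ (m + 1) = A ∩ chainSet σ m := by
            rw [chainSet_succ σ hm]
            ext i
            simp only [mem_inter, mem_insert]
            constructor
            · rintro ⟨hiA, (rfl | hi)⟩
              · exact absurd hiA hxA
              · exact ⟨hiA, hi⟩
            · rintro ⟨hiA, hi⟩; exact ⟨hiA, Or.inr hi⟩
          rw [this]; exact ih
      · rw [chainSet_stab σ (le_of_not_gt hm)]; exact ih
  have := key p
  rwa [chainSet_univ σ le_rfl, Finset.inter_univ] at this

lemma lovaszSum_eq_inner {p : ℕ} (l : Finset (Fin p) → ℝ) (σ : Equiv.Perm (Fin p))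
    (s : Fin p → ℝ) : lovaszSum l σ s = ∑ i : Fin p, s i * gMarg l σ i := by
  rw [lovaszSum, ← Equiv.sum_comp σ (fun i => s i * gMarg l σ i)]
  exact Finset.sum_congr rfl fun j _ => by rw [gMarg_apply]

/-- threshold levels for a sorted permutation -/
noncomputable def fthr {p : ℕ} (π : Equiv.Perm (Fin p)) (s : Fin p → ℝ) (m : ℕ) : ℝ :=
  if h : m < p then s (π ⟨m, h⟩) else 0

/-- threshold coefficients for a sorted permutation -/
noncomputable def cthr {p : ℕ} (π : Equiv.Perm (Fin p)) (s : Fin p → ℝ) (m : ℕ) : ℝ :=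
  fthr π s m - fthr π s (m + 1)

lemma cthr_nonneg {p : ℕ} {π : Equiv.Perm (Fin p)} {s : Fin p → ℝ}
    (hsort : SortsDesc π s) (hs : ∀ i, 0 ≤ s i) (m : ℕ) : 0 ≤ cthr π s m := by
  unfold cthr fthr
  by_cases h1 : m + 1 < p
  · have h0 : m < p := by omega
    rw [dif_pos h0, dif_pos h1]
    have := hsort ⟨m, h0⟩ ⟨m + 1, h1⟩ (by simp [Fin.le_def])
    linarith
  · by_cases h0 : m < p
    · rw [dif_pos h0, dif_neg h1]; simpa using hs (π ⟨m, h0⟩)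
    · rw [dif_neg h0, dif_neg h1]; simp

lemma telescope_cthr {p : ℕ} (π : Equiv.Perm (Fin p)) (s : Fin p → ℝ) (k : ℕ) (hk : k ≤ p) :
    ∑ j : Fin p, (if k ≤ (j : ℕ) then cthr π s j else 0) = fthr π s k := by
  rw [Fin.sum_univ_eq_sum_range (fun m => if k ≤ m then cthr π s m else 0) p]
  have h1 : ∑ m ∈ range p, (if k ≤ m then cthr π s m else 0) = ∑ m ∈ Ico k p, cthr π s m := by
    rw [← Finset.sum_filter]
    congr 1
    ext m
    simp only [mem_filter, mem_range, Finset.mem_Ico]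
    omega
  rw [h1, Finset.sum_Ico_eq_sum_range]
  have h2 : ∀ m, cthr π s (k + m) = fthr π s (k + m) - fthr π s (k + (m + 1)) := by
    intro m; simp [cthr, Nat.add_assoc]
  calc ∑ m ∈ range (p - k), cthr π s (k + m)
      = ∑ m ∈ range (p - k),
          ((fun m => fthr π s (k + m)) m - (fun m => fthr π s (k + m)) (m + 1)) := by
        exact Finset.sum_congr rfl fun m _ => h2 m
    _ = fthr π s (k + 0) - fthr π s (k + (p - k)) := Finset.sum_range_sub' _ _
    _ = fthr π s k := by
        rw [Nat.add_sub_cancel' hk, show k + 0 = k from rfl]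
        simp [fthr]

lemma inner_decomp {p : ℕ} (π : Equiv.Perm (Fin p)) (s : Fin p → ℝ) (g : Fin p → ℝ) :
    ∑ i : Fin p, s i * g i
      = ∑ j : Fin p, cthr π s j * ∑ i ∈ chainSet π ((j : ℕ) + 1), g i := by
  have hswap :
      ∑ j : Fin p, cthr π s j * ∑ i ∈ chainSet π ((j : ℕ) + 1), g i
        = ∑ i : Fin p, ∑ j : Fin p,
            (if i ∈ chainSet π ((j : ℕ) + 1) then cthr π s j * g i else 0) := by
    rw [Finset.sum_comm]
    refine Finset.sum_congr rfl fun j _ => ?_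
    rw [Finset.mul_sum]
    rw [Finset.sum_ite_mem Finset.univ (chainSet π ((j : ℕ) + 1))
      (fun i => cthr π s j * g i), Finset.univ_inter]
  rw [hswap]
  refine Finset.sum_congr rfl fun i _ => ?_
  have hcond : ∀ j : Fin p,
      (if i ∈ chainSet π ((j : ℕ) + 1) then cthr π s j * g i else 0)
        = (if ((π.symm i : ℕ)) ≤ (j : ℕ) then cthr π s j else 0) * g i := by
    intro j
    rw [if_congr ((mem_chainSet π _ i).trans Nat.lt_succ_iff) rfl rfl]
    split <;> simp
  rw [Finset.sum_congr rfl fun j _ => hcond j, ← Finset.sum_mul,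
    telescope_cthr π s (π.symm i : ℕ) (le_of_lt (π.symm i).isLt)]
  have : fthr π s ((π.symm i : ℕ)) = s i := by
    rw [fthr, dif_pos (π.symm i).isLt]
    congr 1
    simp [Fin.eta]
  rw [this, mul_comm]

/-- greedy optimality: any permutation's greedy value is at most the sorted one -/
lemma lovaszSum_le_sorted {p : ℕ} {l : Finset (Fin p) → ℝ} {π : Equiv.Perm (Fin p)}
    {s : Fin p → ℝ} (hsub : Submodular l) (h0 : l ∅ = 0)
    (hsort : SortsDesc π s) (hs : ∀ i, 0 ≤ s i) (σ : Equiv.Perm (Fin p)) :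
    lovaszSum l σ s ≤ lovaszSum l π s := by
  rw [lovaszSum_eq_inner l σ, lovaszSum_eq_inner l π,
    inner_decomp π s (gMarg l σ), inner_decomp π s (gMarg l π)]
  refine Finset.sum_le_sum fun j _ => ?_
  refine mul_le_mul_of_nonneg_left ?_ (cthr_nonneg hsort hs j)
  calc ∑ i ∈ chainSet π ((j : ℕ) + 1), gMarg l σ i
      ≤ l (chainSet π ((j : ℕ) + 1)) := sum_gMarg_le l σ hsub h0 _
    _ = ∑ i ∈ chainSet π ((j : ℕ) + 1), gMarg l π i := (sum_gMarg_chain l π h0 _).symm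

lemma sortsDesc_sortDesc {p : ℕ} (s : Fin p → ℝ) : SortsDesc (sortDesc s) s := by
  intro j k hjk
  have := Tuple.monotone_sort (fun i => -s i) hjk
  simp only [Function.comp_apply] at this
  simpa [sortDesc] using this

/-- a down-closed subset of Fin p is an initial segment -/
lemma downclosed_eq_init {p : ℕ} (S : Finset (Fin p))
    (hdown : ∀ k k' : Fin p, k ≤ k' → k' ∈ S → k ∈ S) :
    S = Finset.univ.filter (fun k : Fin p => (k : ℕ) < S.card) := by
  ext k
  simp only [mem_filter, mem_univ, true_and]
  constructor
  · intro hk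
    have hsub : Finset.Iic k ⊆ S := fun k' hk' => hdown k' k (Finset.mem_Iic.mp hk') hk
    have := Finset.card_le_card hsub
    rw [Fin.card_Iic] at this
    omega
  · intro hk
    by_contra hkS
    have hsub : S ⊆ Finset.Iio k := by
      intro k' hk'
      rw [Finset.mem_Iio]
      by_contra hge
      exact hkS (hdown k k' (le_of_not_gt hge) hk')
    have := Finset.card_le_card hsub
    rw [Fin.card_Iio] at this
    omega

/-- a permutation listing the elements of I first -/
noncomputable def permOf {p : ℕ} (I : Finset (Fin p)) : Equiv.Perm (Fin p) :=
  Tuple.sort (fun i => if i ∈ I then (0 : ℕ) else 1)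

lemma chainSet_permOf {p : ℕ} (I : Finset (Fin p)) :
    chainSet (permOf I) I.card = I := by
  set σ := permOf I with hσ
  set f : Fin p → ℕ := fun i => if i ∈ I then 0 else 1 with hf
  have hmono : Monotone (f ∘ σ) := Tuple.monotone_sort f
  set S : Finset (Fin p) := Finset.univ.filter (fun k => σ k ∈ I) with hS
  have hdown : ∀ k k' : Fin p, k ≤ k' → k' ∈ S → k ∈ S := by
    intro k k' hle hk'
    simp only [hS, mem_filter, mem_univ, true_and] at hk' ⊢
    have h1 : f (σ k) ≤ f (σ k') := hmono hle
    have h2 : f (σ k') = 0 := if_pos hk'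
    have h3 : f (σ k) = 0 := by omega
    by_contra hcon
    have : f (σ k) = 1 := if_neg hcon
    omega
  have hcard : S.card = I.card := by
    have himg : S.image σ = I := by
      ext i
      simp only [hS, mem_image, mem_filter, mem_univ, true_and]
      constructor
      · rintro ⟨k, hk, rfl⟩; exact hk
      · intro hi; exact ⟨σ.symm i, by simpa using hi, by simp⟩
    rw [← himg, Finset.card_image_of_injective _ σ.injective]
  have hSeq := downclosed_eq_init S hdown
  rw [hcard] at hSeq
  have : chainSet σ I.card = S.image σ := by rw [chainSet, ← hSeq]
  rw [this]
  ext i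
  simp only [hS, mem_image, mem_filter, mem_univ, true_and]
  constructor
  · rintro ⟨k, hk, rfl⟩; exact hk
  · intro hi; exact ⟨σ.symm i, by simpa using hi, by simp⟩

/-- the slack-rescaling value of I is at most the greedy value of a
permutation listing I first -/
lemma slack_bound {p : ℕ} {l : Finset (Fin p) → ℝ} (hsub : Submodular l)
    (hinc : ∀ A B : Finset (Fin p), A ⊆ B → l A ≤ l B) (h0 : l ∅ = 0)
    (hnn : ∀ A : Finset (Fin p), 0 ≤ l A) {s : Fin p → ℝ}
    (hs0 : ∀ i, 0 ≤ s i) (hs1 : ∀ i, s i ≤ 1) (I : Finset (Fin p)) :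
    l I * (1 - 2 * ∑ i ∈ I, (1 - s i)) ≤ lovaszSum l (permOf I) s := by
  set σ := permOf I with hσ
  set m := I.card with hmdef
  have hchain : chainSet σ m = I := chainSet_permOf I
  set F : Finset (Fin p) := Finset.univ.filter (fun j : Fin p => (j : ℕ) < m) with hF
  have hFimg : F.image σ = I := hchain
  have hmemI : ∀ j ∈ F, σ j ∈ I := by
    intro j hj
    rw [← hchain, mem_chainSet]
    simpa [hF] using hj
  have hd_nonneg : ∀ j : Fin p,
      0 ≤ l (chainSet σ ((j : ℕ) + 1)) - l (chainSet σ (j : ℕ)) := fun j =>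
    sub_nonneg.mpr (hinc _ _ (chainSet_mono σ (Nat.le_succ _)))
  have hterm_nonneg : ∀ j : Fin p,
      0 ≤ s (σ j) * (l (chainSet σ ((j : ℕ) + 1)) - l (chainSet σ (j : ℕ))) := fun j =>
    mul_nonneg (hs0 _) (hd_nonneg j)
  have step1 :
      ∑ j ∈ F, s (σ j) * (l (chainSet σ ((j : ℕ) + 1)) - l (chainSet σ (j : ℕ)))
        ≤ lovaszSum l σ s :=
    Finset.sum_le_sum_of_subset_of_nonneg (Finset.subset_univ F)
      (fun j _ _ => hterm_nonneg j)
  -- the chain increments on F telescope to l I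
  have hsum_d : ∑ j ∈ F, (l (chainSet σ ((j : ℕ) + 1)) - l (chainSet σ (j : ℕ))) = l I := by
    have h1 : ∑ i ∈ I, gMarg l σ i = l I := by
      have := sum_gMarg_chain l σ h0 m
      rwa [hchain] at this
    rw [← h1, ← hFimg, Finset.sum_image (fun a _ b _ h => σ.injective h)]
    exact Finset.sum_congr rfl fun j _ => (gMarg_apply l σ j).symm
  -- sum of (1 - s) over F equals the sum over I
  have hsum_one : ∑ j ∈ F, (1 - s (σ j)) = ∑ i ∈ I, (1 - s i) := by
    rw [← hFimg, Finset.sum_image (fun a _ b _ h => σ.injective h)]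
  -- each increment is at most l I
  have hd_le : ∀ j ∈ F, l (chainSet σ ((j : ℕ) + 1)) - l (chainSet σ (j : ℕ)) ≤ l I := by
    intro j hj
    have hins : chainSet σ ((j : ℕ) + 1) = insert (σ j) (chainSet σ (j : ℕ)) := by
      rw [chainSet_succ σ j.isLt]
    have hnot : σ j ∉ chainSet σ (j : ℕ) := by
      have := notMem_chainSet_self σ j.isLt
      simpa using this
    have hsm := hsub {σ j} (chainSet σ (j : ℕ))
    have hu : {σ j} ∪ chainSet σ (j : ℕ) = chainSet σ ((j : ℕ) + 1) := by
      rw [hins, Finset.insert_eq]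
    have hi : {σ j} ∩ chainSet σ (j : ℕ) = ∅ := by
      rw [Finset.singleton_inter_of_notMem hnot]
    rw [hu, hi, h0] at hsm
    have hsingle : l {σ j} ≤ l I :=
      hinc _ _ (Finset.singleton_subset_iff.mpr (hmemI j hj))
    linarith
  set T := ∑ i ∈ I, (1 - s i) with hT
  have hT0 : 0 ≤ T := Finset.sum_nonneg fun i _ => by linarith [hs1 i]
  have step2 :
      l I * (1 - T)
        ≤ ∑ j ∈ F, s (σ j) * (l (chainSet σ ((j : ℕ) + 1)) - l (chainSet σ (j : ℕ))) := by
    have hsplit : ∀ j : Fin p,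
        s (σ j) * (l (chainSet σ ((j : ℕ) + 1)) - l (chainSet σ (j : ℕ)))
          = (l (chainSet σ ((j : ℕ) + 1)) - l (chainSet σ (j : ℕ)))
            - (1 - s (σ j)) * (l (chainSet σ ((j : ℕ) + 1)) - l (chainSet σ (j : ℕ))) := by
      intro j; ring
    rw [Finset.sum_congr rfl fun j _ => hsplit j, Finset.sum_sub_distrib, hsum_d]
    have hbound :
        ∑ j ∈ F, (1 - s (σ j)) * (l (chainSet σ ((j : ℕ) + 1)) - l (chainSet σ (j : ℕ)))
          ≤ ∑ j ∈ F, (1 - s (σ j)) * l I := by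
      refine Finset.sum_le_sum fun j hj => ?_
      exact mul_le_mul_of_nonneg_left (hd_le j hj) (by linarith [hs1 (σ j)])
    have : ∑ j ∈ F, (1 - s (σ j)) * l I = T * l I := by
      rw [← Finset.sum_mul, hsum_one]
    rw [this] at hbound
    nlinarith [hnn I]
  have hfinal : l I * (1 - 2 * T) ≤ l I * (1 - T) := by
    apply mul_le_mul_of_nonneg_left _ (hnn I)
    linarith
  calc l I * (1 - 2 * T) ≤ l I * (1 - T) := hfinal
    _ ≤ _ := step2
    _ ≤ lovaszSum l σ s := step1

/-- inside the unit cube the slack-rescaling surrogate is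
dominated by the Lovász extension, the Lovász hinge coincides with the Lovász
extension there, and hence the Lovász hinge dominates slack rescaling. -/
theorem slack_le_lovasz_on_cube (p : ℕ) (hp : 1 ≤ p)
    (l : Finset (Fin p) → ℝ) (hsub : Submodular l)
    (hinc : ∀ A B : Finset (Fin p), A ⊆ B → l A ≤ l B) (h0 : l ∅ = 0)
    (hnn : ∀ A : Finset (Fin p), 0 ≤ l A) :
    ∀ s ∈ Set.Icc (0 : Fin p → ℝ) 1,
      slackSur l s ≤ lovaszExt l s ∧
      hingeInc l s = lovaszExt l s ∧
      slackSur l s ≤ hingeInc l s := by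
  intro s hs
  have hs0 : ∀ i, 0 ≤ s i := fun i => hs.1 i
  have hs1 : ∀ i, s i ≤ 1 := fun i => hs.2 i
  have hsort : SortsDesc (sortDesc s) s := sortsDesc_sortDesc s
  have hmax : ∀ σ : Equiv.Perm (Fin p), lovaszSum l σ s ≤ lovaszExt l s := fun σ =>
    lovaszSum_le_sorted hsub h0 hsort hs0 σ
  have h1 : slackSur l s ≤ lovaszExt l s := by
    rw [slackSur]
    refine Finset.sup'_le _ _ fun I _ => ?_
    exact le_trans (slack_bound hsub hinc h0 hnn hs0 hs1 I) (hmax (permOf I))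
  have h2 : hingeInc l s = lovaszExt l s := by
    have heq : ∀ σ : Equiv.Perm (Fin p),
        (∑ j : Fin p, max (s (σ j)) 0 *
          (l (chainSet σ ((j : ℕ) + 1)) - l (chainSet σ (j : ℕ)))) = lovaszSum l σ s := by
      intro σ
      refine Finset.sum_congr rfl fun j _ => ?_
      rw [max_eq_left (hs0 (σ j))]
    apply le_antisymm
    · rw [hingeInc]
      refine Finset.sup'_le _ _ fun σ _ => ?_
      rw [heq σ]
      exact hmax σ
    · rw [hingeInc]
      refine le_trans ?_ (Finset.le_sup' _ (Finset.mem_univ (sortDesc s)))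
      rw [heq (sortDesc s), lovaszExt]
  exact ⟨h1, h2, by rw [h2]; exact h1⟩
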